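/- If θ : (0,∞) → [0,∞) is a monotone decreasing function with lim_{t→∞} θ(t) = 0, then for any m ≥ 0 there exists a monotone decreasing function s̄ : (0,∞) → (0,1) with lim_{t→∞} s̄(t) = 0 such that lim_{t→∞} θ(t·s̄(t)/2) · s̄(t)^{-m/2} = 0. -/
import Mathlib


open Filter

/-- If `θ : (0,∞) → [0,∞)` is monotone decreasing with `θ(t) → 0` as `t → ∞`, then for any
`m ≥ 0` there is a monotone decreasing `s̄ : (0,∞) → (0,1)` with `s̄(t) → 0` such that
`θ(t·s̄(t)/2) · s̄(t)^{-m/2} → 0` as `t → ∞`. -/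
theorem stmt_0 (θ : ℝ → ℝ) (hmono : AntitoneOn θ (Set.Ioi (0 : ℝ)))
    (hnn : ∀ t, 0 < t → 0 ≤ θ t)
    (hlim : Tendsto θ atTop (nhds 0)) (m : ℝ) (hm : 0 ≤ m) :
    ∃ sbar : ℝ → ℝ, AntitoneOn sbar (Set.Ioi (0 : ℝ)) ∧
      (∀ t, 0 < t → sbar t ∈ Set.Ioo (0 : ℝ) 1) ∧
      Tendsto sbar atTop (nhds 0) ∧
      Tendsto (fun t => θ (t * sbar t / 2) * (sbar t) ^ (-(m / 2)))
        atTop (nhds 0) := by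
  have hm1 : (0:ℝ) < m + 1 := by linarith
  set p : ℝ := (m + 1)⁻¹ with hp
  have hp0 : 0 < p := inv_pos.mpr hm1
  set q : ℝ := 1 - p * m / 2 with hq
  have hpm : p * m < 1 := by
    rw [hp]
    rw [inv_mul_lt_iff₀ hm1]
    linarith
  have hq0 : 0 < q := by rw [hq]; linarith
  set s : ℝ → ℝ :=
    fun t => min (1/2) (max (θ (Real.sqrt t / 2) ^ p) (t ^ (-(1/2) : ℝ))) with hs
  -- auxiliary positivity for arguments
  have hsqpos : ∀ t : ℝ, 0 < t → 0 < Real.sqrt t / 2 := fun t ht =>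
    div_pos (Real.sqrt_pos.mpr ht) two_pos
  -- antitone
  have hanti : AntitoneOn s (Set.Ioi (0 : ℝ)) := by
    intro a ha b hb hab
    simp only [Set.mem_Ioi] at ha hb
    have h1 : θ (Real.sqrt b / 2) ≤ θ (Real.sqrt a / 2) := by
      refine hmono (Set.mem_Ioi.mpr (hsqpos a ha)) (Set.mem_Ioi.mpr (hsqpos b hb)) ?_
      exact div_le_div_of_nonneg_right (Real.sqrt_le_sqrt hab) (by norm_num)
    have h1' : θ (Real.sqrt b / 2) ^ p ≤ θ (Real.sqrt a / 2) ^ p :=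
      Real.rpow_le_rpow (hnn _ (hsqpos b hb)) h1 hp0.le
    have h2 : b ^ (-(1/2) : ℝ) ≤ a ^ (-(1/2) : ℝ) :=
      Real.rpow_le_rpow_of_nonpos ha hab (by norm_num)
    exact min_le_min le_rfl (max_le_max h1' h2)
  -- membership
  have hmem : ∀ t, 0 < t → s t ∈ Set.Ioo (0:ℝ) 1 := by
    intro t ht
    constructor
    · exact lt_min (by norm_num)
        (lt_of_lt_of_le (Real.rpow_pos_of_pos ht _) (le_max_right _ _))
    · exact lt_of_le_of_lt (min_le_left _ _) (by norm_num)
  -- θ(√t/2) → 0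
  have hsqrt_atTop : Tendsto (fun t : ℝ => Real.sqrt t / 2) atTop atTop := by
    refine Tendsto.atTop_div_const two_pos ?_
    refine (tendsto_rpow_atTop (by norm_num : (0:ℝ) < 1/2)).congr' ?_
    filter_upwards [eventually_ge_atTop (0:ℝ)] with t ht
    exact (Real.sqrt_eq_rpow t).symm
  have hθsq : Tendsto (fun t : ℝ => θ (Real.sqrt t / 2)) atTop (nhds 0) :=
    hlim.comp hsqrt_atTop
  have hθp : Tendsto (fun t : ℝ => θ (Real.sqrt t / 2) ^ p) atTop (nhds 0) := by
    have := hθsq.rpow_const (Or.inr hp0.le)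
    rwa [Real.zero_rpow hp0.ne'] at this
  have hinv : Tendsto (fun t : ℝ => t ^ (-(1/2) : ℝ)) atTop (nhds 0) :=
    tendsto_rpow_neg_atTop (by norm_num)
  -- s → 0
  have hs0 : Tendsto s atTop (nhds 0) := by
    have hmax : Tendsto
        (fun t : ℝ => max (θ (Real.sqrt t / 2) ^ p) (t ^ (-(1/2) : ℝ)))
        atTop (nhds 0) := by
      have := hθp.max hinv
      rwa [max_self] at this
    refine squeeze_zero' ?_ ?_ hmax
    · filter_upwards [eventually_gt_atTop (0:ℝ)] with t ht
      exact (hmem t ht).1.le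
    · filter_upwards with t
      exact min_le_right _ _
  refine ⟨s, hanti, hmem, hs0, ?_⟩
  -- main limit
  have hθq : Tendsto (fun t : ℝ => θ (Real.sqrt t / 2) ^ q) atTop (nhds 0) := by
    have := hθsq.rpow_const (Or.inr hq0.le)
    rwa [Real.zero_rpow hq0.ne'] at this
  refine squeeze_zero' ?_ ?_ hθq
  · filter_upwards [eventually_gt_atTop (0:ℝ)] with t ht
    have hst := (hmem t ht).1
    exact mul_nonneg (hnn _ (by positivity)) (Real.rpow_nonneg hst.le _)
  · filter_upwards [eventually_ge_atTop (4:ℝ),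
      hθp.eventually (eventually_le_nhds (by norm_num : (0:ℝ) < 1/2))] with t ht4 hsmall
    have ht0 : (0:ℝ) < t := by linarith
    have hsq2 : (2:ℝ) ≤ Real.sqrt t := by
      rw [show (2:ℝ) = Real.sqrt 4 by
        rw [show (4:ℝ) = 2^2 by norm_num, Real.sqrt_sq (by norm_num)]]
      exact Real.sqrt_le_sqrt ht4
    have hts : t ^ (-(1/2) : ℝ) ≤ 1/2 := by
      rw [Real.rpow_neg ht0.le, ← Real.sqrt_eq_rpow]
      rw [inv_le_comm₀ (Real.sqrt_pos.mpr ht0) (by norm_num)]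
      calc (1/2 : ℝ)⁻¹ = 2 := by norm_num
        _ ≤ Real.sqrt t := hsq2
    have hs_ge_inv : t ^ (-(1/2) : ℝ) ≤ s t := le_min hts (le_max_right _ _)
    have hs_pos : 0 < s t := (hmem t ht0).1
    -- t * s t ≥ √t
    have hmul : Real.sqrt t ≤ t * s t := by
      have h1 : t * t ^ (-(1/2) : ℝ) ≤ t * s t :=
        mul_le_mul_of_nonneg_left hs_ge_inv ht0.le
      have h2 : t * t ^ (-(1/2) : ℝ) = Real.sqrt t := by
        rw [Real.sqrt_eq_rpow]
        nth_rewrite 1 [← Real.rpow_one t]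
        rw [← Real.rpow_add ht0]
        norm_num
      linarith
    have hargpos : 0 < t * s t / 2 := by positivity
    have hθle : θ (t * s t / 2) ≤ θ (Real.sqrt t / 2) :=
      hmono (Set.mem_Ioi.mpr (hsqpos t ht0)) (Set.mem_Ioi.mpr hargpos)
        (div_le_div_of_nonneg_right hmul (by norm_num))
    set A := θ (Real.sqrt t / 2) with hA
    have hAnn : 0 ≤ A := hnn _ (hsqpos t ht0)
    rcases hAnn.eq_or_lt with hA0 | hA0
    · -- A = 0
      have hf0 : θ (t * s t / 2) = 0 :=
        le_antisymm (hA0 ▸ hθle) (hnn _ hargpos)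
      rw [hf0, zero_mul, ← hA0, Real.zero_rpow hq0.ne']
    · -- A > 0
      have hsA : A ^ p ≤ s t := le_min hsmall (le_max_left _ _)
      have hsinv : s t ^ (-(m/2) : ℝ) ≤ (A ^ p) ^ (-(m/2) : ℝ) :=
        Real.rpow_le_rpow_of_nonpos (Real.rpow_pos_of_pos hA0 p) hsA
          (by linarith [neg_nonpos.mpr (div_nonneg hm (by norm_num : (0:ℝ) ≤ 2))])
      have hbound : θ (t * s t / 2) * s t ^ (-(m/2) : ℝ) ≤ A * (A ^ p) ^ (-(m/2) : ℝ) :=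
        mul_le_mul hθle hsinv (Real.rpow_nonneg hs_pos.le _) hAnn
      have heq : A * (A ^ p) ^ (-(m/2) : ℝ) = A ^ q := by
        rw [← Real.rpow_mul hAnn,
          show A * A ^ (p * -(m/2)) = A ^ (1:ℝ) * A ^ (p * -(m/2)) by rw [Real.rpow_one],
          ← Real.rpow_add hA0]
        congr 1
        rw [hq]; ring
      rw [heq] at hbound
      exact hbound
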